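/- For every ε > 0 and s ∈ ℕ there exist T, N ∈ ℕ with the following property: for every red-blue edge-coloring of K_n with n > N, there is a partition of the vertex set into T parts V_1,...,V_T whose sizes differ by at most 1, and colors C_1,...,C_T ∈ {R,B}, such that all but at most εT of the parts V_i are (C_i, ε, s)-adequate. -/

import Mathlib

/-- `K` is a clique of color `col` and size `s` under the edge-coloring `c`. -/
def IsCliqueOf {V : Type*} [DecidableEq V] (c : V → V → Bool) (col : Bool) (s : ℕ)
    (K : Finset V) : Prop :=
  K.card = s ∧ ∀ x ∈ K, ∀ y ∈ K, x ≠ y → c x y = col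

/-- `X` is `(C, ε, s)`-adequate: every subset of `X` of size at least `ε|X|` contains a
`C`-colored clique of size `s`. -/
def Adequate {V : Type*} [DecidableEq V] (c : V → V → Bool) (C : Bool) (ε : ℝ) (s : ℕ)
    (X : Finset V) : Prop :=
  ∀ Y ⊆ X, ε * X.card ≤ Y.card → ∃ K ⊆ Y, IsCliqueOf c C s K

/-- For all `ε > 0` and `s` there are `T, N` such that: every 2-edge-coloring of `K_n` with
`n > N` admits a partition of the vertices into `T` almost equal parts `V₁, …, V_T` with
colors `C₁, …, C_T`, all but at most `εT` of which are `(Cᵢ, ε, s)`-adequate. -/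
lemma cliqueOf_insert {V : Type*} [DecidableEq V] {c : V → V → Bool}
    (hsym : ∀ x y, c x y = c y x) {col : Bool} {a : ℕ} {K : Finset V} {v : V}
    (hK : IsCliqueOf c col a K) (hv : v ∉ K) (hedge : ∀ y ∈ K, c v y = col) :
    IsCliqueOf c col (a + 1) (insert v K) := by
  obtain ⟨hcard, hcl⟩ := hK
  refine ⟨by rw [Finset.card_insert_of_notMem hv, hcard], ?_⟩
  intro x hx y hy hxy
  rcases Finset.mem_insert.1 hx with hx' | hx' <;> rcases Finset.mem_insert.1 hy with hy' | hy'
  · exact absurd (hx'.trans hy'.symm) hxy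
  · rw [hx']; exact hedge y hy'
  · rw [hy', hsym]; exact hedge x hx'
  · exact hcl x hx' y hy' hxy

lemma cliqueOf_subset {V : Type*} [DecidableEq V] {c : V → V → Bool}
    {col : Bool} {a : ℕ} {K K' : Finset V} (hK : IsCliqueOf c col a K)
    (hsub : K' ⊆ K) (hcard : K'.card = a') : IsCliqueOf c col a' K' :=
  ⟨hcard, fun x hx y hy hxy => hK.2 x (hsub hx) y (hsub hy) hxy⟩

/-- Finite Ramsey theorem for pairs, two colors. -/
lemma ramsey_pair (a b : ℕ) : ∃ R : ℕ, ∀ (n : ℕ) (c : Fin n → Fin n → Bool),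
    (∀ x y, c x y = c y x) → ∀ S : Finset (Fin n), R ≤ S.card →
      (∃ K ⊆ S, IsCliqueOf c true a K) ∨ (∃ K ⊆ S, IsCliqueOf c false b K) := by
  induction a generalizing b with
  | zero =>
    exact ⟨0, fun n c _ S _ => Or.inl ⟨∅, Finset.empty_subset _, by simp [IsCliqueOf]⟩⟩
  | succ a iha =>
    induction b with
    | zero =>
      exact ⟨0, fun n c _ S _ => Or.inr ⟨∅, Finset.empty_subset _, by simp [IsCliqueOf]⟩⟩
    | succ b ihb =>
      obtain ⟨R1, h1⟩ := iha (b + 1)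
      obtain ⟨R2, h2⟩ := ihb
      refine ⟨R1 + R2 + 1, fun n c hsym S hS => ?_⟩
      have hne : S.Nonempty := Finset.card_pos.1 (by omega)
      obtain ⟨v, hv⟩ := hne
      set S' := S.erase v with hS'
      have hS'card : R1 + R2 ≤ S'.card := by
        have h1' : S'.card = S.card - 1 := Finset.card_erase_of_mem hv
        omega
      have hAB : (S'.filter (fun y => c v y = true)).card
          + (S'.filter (fun y => c v y = false)).card = S'.card := by
        have h2' : S'.filter (fun y => c v y = false)
            = S'.filter (fun y => ¬ (c v y = true)) := by
          apply Finset.filter_congr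
          intro y _
          simp
        rw [h2']
        exact Finset.card_filter_add_card_filter_not (p := fun y => c v y = true)
      set A := S'.filter (fun y => c v y = true) with hA
      set B := S'.filter (fun y => c v y = false) with hB
      have hcase : R1 ≤ A.card ∨ R2 ≤ B.card := by omega
      rcases hcase with hc | hc
      · rcases h1 n c hsym A hc with ⟨K, hKA, hK⟩ | ⟨K, hKA, hK⟩
        · -- extend true clique by v
          have hvK : v ∉ K := fun h => (Finset.mem_erase.1 (Finset.mem_filter.1 (hKA h)).1).1 rfl
          refine Or.inl ⟨insert v K, ?_, cliqueOf_insert hsym hK hvK ?_⟩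
          · exact Finset.insert_subset hv (hKA.trans ((Finset.filter_subset _ _).trans (Finset.erase_subset _ _)))
          · intro y hy
            exact (Finset.mem_filter.1 (hKA hy)).2
        · exact Or.inr ⟨K, hKA.trans ((Finset.filter_subset _ _).trans (Finset.erase_subset _ _)), hK⟩
      · rcases h2 n c hsym B hc with ⟨K, hKB, hK⟩ | ⟨K, hKB, hK⟩
        · exact Or.inl ⟨K, hKB.trans ((Finset.filter_subset _ _).trans (Finset.erase_subset _ _)), hK⟩
        · have hvK : v ∉ K := fun h => (Finset.mem_erase.1 (Finset.mem_filter.1 (hKB h)).1).1 rfl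
          refine Or.inr ⟨insert v K, ?_, cliqueOf_insert hsym hK hvK ?_⟩
          · exact Finset.insert_subset hv (hKB.trans ((Finset.filter_subset _ _).trans (Finset.erase_subset _ _)))
          · intro y hy
            exact (Finset.mem_filter.1 (hKB hy)).2

lemma mem_foldr_union {n : ℕ} (L : List (Finset (Fin n) × Bool)) (x : Fin n) :
    x ∈ L.foldr (fun p acc => p.1 ∪ acc) ∅ ↔ ∃ p ∈ L, x ∈ p.1 := by
  induction L with
  | nil => simp
  | cons p L ih => simp [ih]

lemma exists_cover {n : ℕ} (α R : ℕ) (c : Fin n → Fin n → Bool)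
    (hram : ∀ S : Finset (Fin n), R ≤ S.card →
      ∃ col K, K ⊆ S ∧ IsCliqueOf c col α K) (hα : 0 < α) :
    ∀ S : Finset (Fin n), ∃ L : List (Finset (Fin n) × Bool),
      L.Pairwise (fun p q => Disjoint p.1 q.1) ∧
      (∀ p ∈ L, IsCliqueOf c p.2 α p.1) ∧
      (∀ p ∈ L, p.1 ⊆ S) ∧
      (S \ L.foldr (fun p acc => p.1 ∪ acc) ∅).card < R := by
  intro S
  induction S using Finset.strongInduction with
  | _ S ih =>
    by_cases hS : S.card < R
    · refine ⟨[], by simp, by simp, by simp, ?_⟩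
      simpa using hS
    · obtain ⟨col, K, hKS, hK⟩ := hram S (le_of_not_gt hS)
      have hKne : K.Nonempty := Finset.card_pos.1 (by rw [hK.1]; exact hα)
      have hss : S \ K ⊂ S := by
        obtain ⟨v, hv⟩ := hKne
        refine Finset.ssubset_iff_of_subset Finset.sdiff_subset |>.2 ⟨v, hKS hv, by simp [hv]⟩
      obtain ⟨L', hpw, hcl, hsub, hrem⟩ := ih (S \ K) hss
      refine ⟨(K, col) :: L', ?_, ?_, ?_, ?_⟩
      · refine List.pairwise_cons.2 ⟨fun q hq => ?_, hpw⟩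
        refine Finset.disjoint_left.2 fun x hxK hxq => ?_
        exact (Finset.mem_sdiff.1 (hsub q hq hxq)).2 hxK
      · rintro p hp
        rcases List.mem_cons.1 hp with rfl | hp
        · exact hK
        · exact hcl p hp
      · rintro p hp
        rcases List.mem_cons.1 hp with rfl | hp
        · exact hKS
        · exact (hsub p hp).trans Finset.sdiff_subset
      · have heq : S \ (K ∪ L'.foldr (fun p acc => p.1 ∪ acc) ∅)
            = (S \ K) \ L'.foldr (fun p acc => p.1 ∪ acc) ∅ := by
          ext x
          simp only [Finset.mem_sdiff, Finset.mem_union, not_or]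
          tauto
        simp only [List.foldr_cons]
        rw [heq]
        exact hrem

lemma length_flatten_const {X : Type*} {α : ℕ} :
    ∀ (LL : List (List X)), (∀ t ∈ LL, t.length = α) →
      LL.flatten.length = LL.length * α := by
  intro LL
  induction LL with
  | nil => simp
  | cons t rest ih =>
    intro h
    simp only [List.flatten_cons, List.length_append, List.length_cons]
    rw [ih (fun t ht => h t (List.mem_cons_of_mem _ ht)), h t List.mem_cons_self]
    ring

lemma get_flatten_mem {X : Type*} {α : ℕ} (hα : 0 < α) :
    ∀ (LL : List (List X)), (∀ t ∈ LL, t.length = α) → ∀ (k : ℕ)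
      (h1 : k < LL.flatten.length) (h2 : k / α < LL.length),
      LL.flatten[k] ∈ LL[k / α] := by
  intro LL
  induction LL with
  | nil => intro _ k _ h2; simp at h2
  | cons t rest ih =>
    intro h k h1 h2
    have htl : t.length = α := h t List.mem_cons_self
    by_cases hk : k < α
    · have hdiv : k / α = 0 := Nat.div_eq_of_lt hk
      have hkt : k < t.length := by omega
      have : (t ++ rest.flatten)[k]'(by simpa using h1) = t[k] := List.getElem_append_left hkt
      simp only [List.flatten_cons, hdiv, List.getElem_cons_zero]
      rw [this]
      exact List.getElem_mem hkt
    · have hαk : α ≤ k := le_of_not_gt hk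
      have hdiv : k / α = (k - α) / α + 1 := Nat.div_eq_sub_div hα hαk
      have h1' : k - α < rest.flatten.length := by
        have : k < t.length + rest.flatten.length := by simpa using h1
        omega
      have h2' : (k - α) / α < rest.length := by
        simp only [List.length_cons] at h2
        omega
      have hget : (t ++ rest.flatten)[k]'(by simpa using h1)
          = rest.flatten[k - α]'h1' := by
        rw [List.getElem_append_right (by omega)]
        congr 1
        omega
      simp only [List.flatten_cons, hdiv, List.getElem_cons_succ]
      rw [hget]
      exact ih (fun t ht => h t (List.mem_cons_of_mem _ ht)) (k - α) h1' h2'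

lemma div_add_div_le' {a n T : ℕ} (hT : 0 < T) : a / T + n / T ≤ (a + n) / T := by
  rw [Nat.le_div_iff_mul_le hT]
  calc (a / T + n / T) * T = (a / T) * T + (n / T) * T := by ring
    _ ≤ a + n := add_le_add (Nat.div_mul_le_self _ _) (Nat.div_mul_le_self _ _)

lemma div_add_div_ge' {a n T : ℕ} (hT : 0 < T) : (a + n) / T ≤ a / T + n / T + 1 := by
  have h : (a + n) / T < a / T + n / T + 2 := by
    rw [Nat.div_lt_iff_lt_mul hT]
    have ha : a < (a / T + 1) * T := by
      have h1 := Nat.div_add_mod a T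
      have h2 := Nat.mod_lt a hT
      calc a = T * (a / T) + a % T := h1.symm
        _ < T * (a / T) + T := by omega
        _ = (a / T + 1) * T := by ring
    have hn : n < (n / T + 1) * T := by
      have h1 := Nat.div_add_mod n T
      have h2 := Nat.mod_lt n hT
      calc n = T * (n / T) + n % T := h1.symm
        _ < T * (n / T) + T := by omega
        _ = (n / T + 1) * T := by ring
    calc a + n < (a / T + 1) * T + (n / T + 1) * T := Nat.add_lt_add ha hn
      _ = (a / T + n / T + 2) * T := by ring
  omega

lemma adequate_of_cliques {n : ℕ} {c : Fin n → Fin n → Bool} {col : Bool} {ε : ℝ}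
    {s α : ℕ} (hα : 0 < α) {M : ℕ → Finset (Fin n)}
    (hmono : ∀ j, ∀ x ∈ M j, ∀ y ∈ M j, x ≠ y → c x y = col)
    {X : Finset (Fin n)} {κ : Fin n → ℕ} {a : ℕ}
    (hκlo : ∀ x ∈ X, a ≤ κ x) (hκhi : ∀ x ∈ X, κ x < a + X.card)
    (hκM : ∀ x ∈ X, x ∈ M (κ x / α))
    (hnum : (s : ℝ) * ((X.card / α : ℕ) + 2) < ε * X.card) :
    Adequate c col ε s X := by
  intro Y hYX hYc
  by_cases hfib : ∃ j ∈ Y.image (fun y => κ y / α),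
      s ≤ (Y.filter (fun y => κ y / α = j)).card
  · obtain ⟨j, _, hjcard⟩ := hfib
    obtain ⟨K, hKsub, hKcard⟩ := Finset.exists_subset_card_eq hjcard
    refine ⟨K, hKsub.trans (Finset.filter_subset _ _), hKcard, ?_⟩
    intro x hx y hy hxy
    have hx' := Finset.mem_filter.1 (hKsub hx)
    have hy' := Finset.mem_filter.1 (hKsub hy)
    have hxM : x ∈ M j := hx'.2 ▸ hκM x (hYX hx'.1)
    have hyM : y ∈ M j := hy'.2 ▸ hκM y (hYX hy'.1)
    exact hmono j x hxM y hyM hxy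
  · exfalso
    push_neg at hfib
    have hYb : Y.card ≤ s * (Y.image (fun y => κ y / α)).card :=
      Finset.card_le_mul_card_image _ s (fun b hb => le_of_lt (hfib b hb))
    have himg : Y.image (fun y => κ y / α) ⊆ Finset.Icc (a / α) ((a + X.card) / α) := by
      intro j hj
      obtain ⟨y, hyY, rfl⟩ := Finset.mem_image.1 hj
      have hyX := hYX hyY
      refine Finset.mem_Icc.2 ⟨Nat.div_le_div_right (hκlo y hyX), ?_⟩
      exact Nat.div_le_div_right (le_of_lt (hκhi y hyX))
    have himgcard : (Y.image (fun y => κ y / α)).card ≤ X.card / α + 2 := by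
      have h1 := Finset.card_le_card himg
      rw [Nat.card_Icc] at h1
      have h2 : (a + X.card) / α ≤ a / α + X.card / α + 1 := div_add_div_ge' hα
      have h3 : a / α ≤ (a + X.card) / α := Nat.div_le_div_right (Nat.le_add_right _ _)
      omega
    have hfin : Y.card ≤ s * (X.card / α + 2) :=
      hYb.trans (Nat.mul_le_mul_left s himgcard)
    have hfinR : (Y.card : ℝ) ≤ (s : ℝ) * ((X.card / α : ℕ) + 2) := by
      exact_mod_cast hfin
    linarith

theorem stmt_9 (ε : ℝ) (hε : 0 < ε) (s : ℕ) :
    ∃ T N : ℕ, 0 < T ∧ ∀ n : ℕ, N < n → ∀ c : Fin n → Fin n → Bool,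
      (∀ x y, c x y = c y x) →
      ∃ (V : Fin T → Finset (Fin n)) (C : Fin T → Bool),
        (∀ i j : Fin T, i ≠ j → Disjoint (V i) (V j)) ∧
        (Finset.univ.biUnion V = Finset.univ) ∧
        (∀ i, (V i).card = n / T ∨ (V i).card = n / T + 1) ∧
        ∃ Bad : Finset (Fin T), (Bad.card : ℝ) ≤ ε * T ∧
          ∀ i ∉ Bad, Adequate c (C i) ε s (V i) := by
  classical
  set K : ℕ := max 1 ⌈1/ε⌉₊ with hKdef
  have hK1 : 1 ≤ K := le_max_left _ _
  have hKε : 1 ≤ ε * K := by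
    have h1 : (1:ℝ)/ε ≤ (K:ℕ) := by
      refine (Nat.le_ceil _).trans ?_
      exact_mod_cast Nat.cast_le.2 (le_max_right _ _)
    calc (1:ℝ) = ε * (1/ε) := by field_simp
      _ ≤ ε * K := mul_le_mul_of_nonneg_left h1 hε.le
  set α : ℕ := 4 * (s+1) * K with hαdef
  have hα : 0 < α := by positivity
  obtain ⟨R, hR⟩ := ramsey_pair α α
  set T : ℕ := 2 * K with hTdef
  have hT : 0 < T := by omega
  set m0 : ℕ := 8 * (s+1) * K with hm0def
  refine ⟨T, T * (m0 + R + 2), hT, ?_⟩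
  intro n hn c hsym
  have hq : m0 + R + 2 ≤ n / T := by
    rw [Nat.le_div_iff_mul_le hT]
    calc (m0 + R + 2) * T = T * (m0 + R + 2) := by ring
      _ ≤ n := hn.le
  -- numeric inequality for adequacy
  have hnumeric : ∀ m : ℕ, n / T ≤ m → (s:ℝ) * ((m / α : ℕ) + 2) < ε * m := by
    intro m hm
    have hm0m : m0 ≤ m := le_trans (by omega) hm
    have hm0R : ((8:ℝ) * (s+1) * K) ≤ m := by
      calc ((8:ℝ) * (s+1) * K) = (m0 : ℕ) := by push_cast [hm0def]; ring
        _ ≤ m := by exact_mod_cast hm0m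
    have hεm : 8 * ((s:ℝ)+1) ≤ ε * m := by
      have h1 : ε * (8 * ((s:ℝ)+1) * K) ≤ ε * m := mul_le_mul_of_nonneg_left hm0R hε.le
      nlinarith [hKε, hε.le, mul_nonneg hε.le (by positivity : (0:ℝ) ≤ 8 * ((s:ℝ)+1) * K)]
    set d : ℕ := m / α with hddef
    have hdα : (d:ℝ) * (4*((s:ℝ)+1)*K) ≤ m := by
      have := Nat.div_mul_le_self m α
      calc (d:ℝ) * (4*((s:ℝ)+1)*K) = ((d * α : ℕ) : ℝ) := by push_cast [hαdef]; ring
        _ ≤ m := by exact_mod_cast this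
    have hd0 : (0:ℝ) ≤ d := Nat.cast_nonneg _
    have hK0 : (1:ℝ) ≤ K := by exact_mod_cast hK1
    have hs0 : (0:ℝ) ≤ s := Nat.cast_nonneg _
    -- 4 s d ≤ ε m
    have hA : ε * ((d:ℝ) * (4*((s:ℝ)+1)*K)) ≤ ε * m := mul_le_mul_of_nonneg_left hdα hε.le
    have hB : 4*(s:ℝ)*d ≤ 4*(s:ℝ)*d*(ε*K) := by
      nlinarith [mul_nonneg (mul_nonneg (by positivity : (0:ℝ) ≤ 4*(s:ℝ)) hd0)
        (by linarith : (0:ℝ) ≤ ε*K - 1)]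
    have hC : 4*(s:ℝ)*d*(ε*K) ≤ ε * m := by nlinarith [mul_nonneg (mul_nonneg hε.le hd0) (by linarith : (0:ℝ) ≤ (K:ℝ))]
    nlinarith
  -- Ramsey cover
  have hram : ∀ S : Finset (Fin n), R ≤ S.card →
      ∃ col K', K' ⊆ S ∧ IsCliqueOf c col α K' := by
    intro S hS
    rcases hR n c hsym S hS with ⟨K', h1, h2⟩ | ⟨K', h1, h2⟩
    exacts [⟨true, K', h1, h2⟩, ⟨false, K', h1, h2⟩]
  obtain ⟨L, hpw, hcl, _, hrem⟩ := exists_cover α R c hram hα Finset.univ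
  set U : Finset (Fin n) := L.foldr (fun p acc => p.1 ∪ acc) ∅ with hUdef
  set Z : Finset (Fin n) := Finset.univ \ U with hZdef
  have hZR : Z.card < R := hrem
  -- sorted main list
  set mainL : List (Finset (Fin n) × Bool) :=
    (L.filter (fun p => p.2)) ++ (L.filter (fun p => !p.2)) with hmainLdef
  have hmem_main : ∀ p, p ∈ mainL ↔ p ∈ L := by
    intro p
    constructor
    · intro hp
      rcases List.mem_append.1 hp with hp | hp
      exacts [(List.mem_filter.1 hp).1, (List.mem_filter.1 hp).1]
    · intro hp
      rcases Bool.eq_false_or_eq_true p.2 with h2 | h2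
      · exact List.mem_append.2 (Or.inl (List.mem_filter.2 ⟨hp, by simp [h2]⟩))
      · exact List.mem_append.2 (Or.inr (List.mem_filter.2 ⟨hp, by simp [h2]⟩))
  have hmainpw : mainL.Pairwise (fun p q => Disjoint p.1 q.1) := by
    rw [hmainLdef, List.pairwise_append]
    refine ⟨hpw.filter _, hpw.filter _, ?_⟩
    intro a ha b hb
    have haL := (List.mem_filter.1 ha).1
    have hbL := (List.mem_filter.1 hb).1
    have ha2 : a.2 = true := by simpa using (List.mem_filter.1 ha).2
    have hb2 : b.2 = false := by simpa using (List.mem_filter.1 hb).2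
    have hab : a ≠ b := by
      intro h
      rw [h, hb2] at ha2
      exact Bool.noConfusion ha2
    haveI : Std.Symm (fun p q : Finset (Fin n) × Bool => Disjoint p.1 q.1) := ⟨fun p q h => h.symm⟩
    exact hpw.forall haL hbL hab
  set LL : List (List (Fin n)) := mainL.map (fun p => p.1.toList) with hLLdef
  have hLLlen : ∀ t ∈ LL, t.length = α := by
    intro t ht
    obtain ⟨p, hp, rfl⟩ := List.mem_map.1 ht
    rw [Finset.length_toList]
    exact (hcl p ((hmem_main p).1 hp)).1
  have hflatlen : LL.flatten.length = mainL.length * α := by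
    rw [length_flatten_const LL hLLlen, hLLdef, List.length_map]
  set zL : List (Fin n) := Z.toList with hzLdef
  set l : List (Fin n) := LL.flatten ++ zL with hldef
  have hUmem : ∀ x, x ∈ LL.flatten ↔ x ∈ U := by
    intro x
    rw [List.mem_flatten]
    constructor
    · rintro ⟨t, ht, hxt⟩
      obtain ⟨p, hp, rfl⟩ := List.mem_map.1 ht
      exact (mem_foldr_union L x).2 ⟨p, (hmem_main p).1 hp, Finset.mem_toList.1 hxt⟩
    · intro hx
      obtain ⟨p, hp, hxp⟩ := (mem_foldr_union L x).1 hx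
      exact ⟨p.1.toList, List.mem_map.2 ⟨p, (hmem_main p).2 hp, rfl⟩, Finset.mem_toList.2 hxp⟩
  have hnodup : l.Nodup := by
    rw [hldef]
    refine List.Nodup.append ?_ Z.nodup_toList ?_
    · rw [List.nodup_flatten]
      constructor
      · intro t ht
        obtain ⟨p, _, rfl⟩ := List.mem_map.1 ht
        exact p.1.nodup_toList
      · exact List.Pairwise.map _ (fun a b hd x hxa hxb =>
          Finset.disjoint_left.1 hd (Finset.mem_toList.1 hxa) (Finset.mem_toList.1 hxb)) hmainpw
    · intro x hx1 hx2
      have hxU := (hUmem x).1 hx1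
      have hxZ := Finset.mem_toList.1 hx2
      rw [hZdef] at hxZ
      exact (Finset.mem_sdiff.1 hxZ).2 hxU
  have hlenl : l.length = n := by
    have h1 : l.toFinset = Finset.univ := by
      refine Finset.eq_univ_iff_forall.2 fun x => ?_
      rw [List.mem_toFinset, hldef, List.mem_append]
      by_cases hxU : x ∈ U
      · exact Or.inl ((hUmem x).2 hxU)
      · exact Or.inr (Finset.mem_toList.2
          (by rw [hZdef]; exact Finset.mem_sdiff.2 ⟨Finset.mem_univ _, hxU⟩))
    calc l.length = l.toFinset.card := (List.toFinset_card_of_nodup hnodup).symm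
      _ = n := by rw [h1, Finset.card_univ, Fintype.card_fin]
  have hfinj : Function.Injective (fun k : Fin n => l.get (Fin.cast hlenl.symm k)) := by
    intro k1 k2 h
    have h2 := List.nodup_iff_injective_get.1 hnodup h
    have h3 := congrArg Fin.val h2
    exact Fin.ext h3
  set e : Fin n ≃ Fin n := Equiv.ofBijective _ ((Finite.injective_iff_bijective).1 hfinj)
    with hedef
  set p1 : ℕ := (L.filter (fun p => p.2)).length with hp1def
  set b1 : ℕ := p1 * α with hb1def
  set b2 : ℕ := mainL.length * α with hb2def
  have hp1main : p1 ≤ mainL.length := by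
    rw [hmainLdef, List.length_append]
    omega
  have hb1b2 : b1 ≤ b2 := Nat.mul_le_mul_right _ hp1main
  have hb2n : b2 + Z.card = n := by
    have h1 : l.length = LL.flatten.length + zL.length := by rw [hldef, List.length_append]
    rw [hlenl, hflatlen] at h1
    have hz : zL.length = Z.card := Finset.length_toList Z
    rw [hz] at h1
    omega
  set start : ℕ → ℕ := fun i => i * n / T with hstartdef
  have hstart0 : start 0 = 0 := by simp [hstartdef]
  have hstartT : start T = n := by
    rw [hstartdef]
    exact Nat.mul_div_cancel_left n hT
  have hstartmono : ∀ i j, i ≤ j → start i ≤ start j :=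
    fun i j h => Nat.div_le_div_right (Nat.mul_le_mul_right _ h)
  have hstartdiff : ∀ i, start i + n / T ≤ start (i+1) ∧ start (i+1) ≤ start i + n / T + 1 := by
    intro i
    have h1 : (i+1) * n = i * n + n := by ring
    rw [hstartdef]
    dsimp only
    rw [h1]
    exact ⟨div_add_div_le' hT, div_add_div_ge' hT⟩
  have hstartlen : ∀ i : Fin T, start (i.val+1) ≤ n := by
    intro i
    rw [← hstartT]
    exact hstartmono _ _ i.isLt
  have hcover : ∀ m : ℕ, m < n → ∃ i : Fin T, start i.val ≤ m ∧ m < start (i.val+1) := by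
    intro m hm
    have h0mem : (⟨0, hT⟩ : Fin T) ∈ Finset.univ.filter (fun i : Fin T => start i.val ≤ m) := by
      refine Finset.mem_filter.2 ⟨Finset.mem_univ _, ?_⟩
      rw [hstart0]
      omega
    set Sset := Finset.univ.filter (fun i : Fin T => start i.val ≤ m) with hSsetdef
    have hSne : Sset.Nonempty := ⟨_, h0mem⟩
    set i := Sset.max' hSne with hidef
    have himem := Sset.max'_mem hSne
    have hile : start i.val ≤ m := (Finset.mem_filter.1 himem).2
    refine ⟨i, hile, ?_⟩
    by_cases hiT : i.val + 1 = T
    · rw [hiT, hstartT]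
      exact hm
    · have hiT' : i.val + 1 < T := lt_of_le_of_ne i.isLt hiT
      by_contra hcon
      push_neg at hcon
      have hmem2 : (⟨i.val + 1, hiT'⟩ : Fin T) ∈ Sset :=
        Finset.mem_filter.2 ⟨Finset.mem_univ _, hcon⟩
      have := Sset.le_max' _ hmem2
      rw [← hidef] at this
      have : i.val + 1 ≤ i.val := this
      omega
  have hfiltcard : ∀ a b : ℕ, b ≤ n →
      (Finset.univ.filter (fun k : Fin n => a ≤ k.val ∧ k.val < b)).card = b - a := by
    intro a b hb
    rw [← Nat.card_Ico a b]
    apply Finset.card_bij (fun (k : Fin n) _ => k.val)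
    · intro k hk
      simp only [Finset.mem_filter] at hk
      exact Finset.mem_Ico.2 ⟨hk.2.1, hk.2.2⟩
    · intro k1 h1 k2 h2 h
      exact Fin.ext h
    · intro m hm
      rcases Finset.mem_Ico.1 hm with ⟨h1, h2⟩
      exact ⟨⟨m, lt_of_lt_of_le h2 hb⟩, Finset.mem_filter.2 ⟨Finset.mem_univ _, h1, h2⟩, rfl⟩
  set V : Fin T → Finset (Fin n) := fun i =>
    (Finset.univ.filter (fun k : Fin n =>
      start i.val ≤ k.val ∧ k.val < start (i.val+1))).image e with hVdef
  set C : Fin T → Bool := fun i => decide (start (i.val+1) ≤ b1) with hCdef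
  have hVcard : ∀ i : Fin T, (V i).card = start (i.val+1) - start i.val := by
    intro i
    rw [hVdef]
    dsimp only
    rw [Finset.card_image_of_injective _ e.injective, hfiltcard _ _ (hstartlen i)]
  have hmemV : ∀ (i : Fin T), ∀ x ∈ V i,
      start i.val ≤ (e.symm x).val ∧ (e.symm x).val < start (i.val+1) := by
    intro i x hx
    rw [hVdef] at hx
    dsimp only at hx
    obtain ⟨k, hk, rfl⟩ := Finset.mem_image.1 hx
    rw [e.symm_apply_apply]
    exact ⟨(Finset.mem_filter.1 hk).2.1, (Finset.mem_filter.1 hk).2.2⟩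
  set M : ℕ → Finset (Fin n) := fun j =>
    if h : j < mainL.length then (mainL[j]'h).1 else ∅ with hMdef
  have hMmem : ∀ (k : ℕ), k < b2 → ∀ (hkn : k < n), e ⟨k, hkn⟩ ∈ M (k / α) := by
    intro k hkb hkn
    have hkj : k < LL.flatten.length := by rw [hflatlen]; exact hkb
    have hjlt : k / α < mainL.length := by
      rw [Nat.div_lt_iff_lt_mul hα]
      exact hkb
    have hjLL : k / α < LL.length := by
      rw [hLLdef, List.length_map]
      exact hjlt
    have h1 : e ⟨k, hkn⟩ = l.get (Fin.cast hlenl.symm ⟨k, hkn⟩) := by rw [hedef]; rfl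
    have h2 : l.get (Fin.cast hlenl.symm ⟨k, hkn⟩) = LL.flatten[k]'hkj := by
      have e1 : l.get (Fin.cast hlenl.symm ⟨k, hkn⟩)
          = (LL.flatten ++ zL)[k]'(by rw [← hldef, hlenl]; exact hkn) := rfl
      rw [e1]
      exact List.getElem_append_left hkj
    have h3 : LL.flatten[k]'hkj ∈ LL[k / α]'hjLL := get_flatten_mem hα LL hLLlen k hkj hjLL
    have h4 : LL[k / α]'hjLL = (mainL[k / α]'hjlt).1.toList := by
      have e1 : LL[k / α]'hjLL
          = (mainL.map (fun p => p.1.toList))[k / α]'(by rw [← hLLdef]; exact hjLL) := rfl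
      rw [e1]
      exact List.getElem_map _
    have h5 : M (k / α) = (mainL[k / α]'hjlt).1 := by
      rw [hMdef]
      exact dif_pos hjlt
    rw [h1, h2, h5]
    rw [h4] at h3
    exact Finset.mem_toList.1 h3
  have hMred : ∀ j, j < p1 → ∀ x ∈ M j, ∀ y ∈ M j, x ≠ y → c x y = true := by
    intro j hj x hx y hy hxy
    have hjm : j < mainL.length := lt_of_lt_of_le hj hp1main
    have hMj : M j = (mainL[j]'hjm).1 := dif_pos hjm
    have hfj : j < (L.filter (fun p => p.2)).length := by rw [← hp1def]; exact hj
    have hget : mainL[j]'hjm = (L.filter (fun p => p.2))[j]'hfj := by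
      have e1 : mainL[j]'hjm
          = ((L.filter (fun p => p.2)) ++ (L.filter (fun p => !p.2)))[j]'(by
              rw [← hmainLdef]; exact hjm) := rfl
      rw [e1]
      exact List.getElem_append_left hfj
    have hpmem : (L.filter (fun p => p.2))[j]'hfj ∈ L.filter (fun p => p.2) :=
      List.getElem_mem _
    obtain ⟨hpL, hp2⟩ := List.mem_filter.1 hpmem
    have hclique := hcl _ hpL
    have hp2' : ((L.filter (fun p => p.2))[j]'hfj).2 = true := by simpa using hp2
    rw [hp2'] at hclique
    rw [hMj, hget] at hx hy
    exact hclique.2 x hx y hy hxy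
  have hMblue : ∀ j, p1 ≤ j → j < mainL.length → ∀ x ∈ M j, ∀ y ∈ M j, x ≠ y →
      c x y = false := by
    intro j hj1 hj2 x hx y hy hxy
    have hMj : M j = (mainL[j]'hj2).1 := dif_pos hj2
    have hlen2 : mainL.length = p1 + (L.filter (fun p => !p.2)).length := by
      rw [hmainLdef, List.length_append, hp1def]
    have hfj : j - p1 < (L.filter (fun p => !p.2)).length := by omega
    have hget : mainL[j]'hj2 = (L.filter (fun p => !p.2))[j - p1]'hfj := by
      have e1 : mainL[j]'hj2
          = ((L.filter (fun p => p.2)) ++ (L.filter (fun p => !p.2)))[j]'(by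
              rw [← hmainLdef]; exact hj2) := rfl
      rw [e1, List.getElem_append_right (by rw [← hp1def]; exact hj1)]
    have hpmem : (L.filter (fun p => !p.2))[j - p1]'hfj ∈ L.filter (fun p => !p.2) :=
      List.getElem_mem _
    obtain ⟨hpL, hp2⟩ := List.mem_filter.1 hpmem
    have hclique := hcl _ hpL
    have hp2' : ((L.filter (fun p => !p.2))[j - p1]'hfj).2 = false := by simpa using hp2
    rw [hp2'] at hclique
    rw [hMj, hget] at hx hy
    exact hclique.2 x hx y hy hxy
  refine ⟨V, C, ?_, ?_, ?_, ?_⟩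
  · -- disjointness
    have key : ∀ i j : Fin T, i.val < j.val → Disjoint (V i) (V j) := by
      intro i j hij
      have hle : start (i.val+1) ≤ start j.val := hstartmono _ _ hij
      rw [hVdef]
      dsimp only
      refine (Finset.disjoint_image e.injective).2 (Finset.disjoint_left.2 ?_)
      intro k hk1 hk2
      simp only [Finset.mem_filter] at hk1 hk2
      omega
    intro i j hij
    have hne : i.val ≠ j.val := fun h => hij (Fin.ext h)
    rcases hne.lt_or_gt with h | h
    · exact key i j h
    · exact (key j i h).symm
  · -- union
    refine Finset.eq_univ_iff_forall.2 fun x => ?_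
    rw [Finset.mem_biUnion]
    obtain ⟨i, h1, h2⟩ := hcover (e.symm x).val (e.symm x).isLt
    refine ⟨i, Finset.mem_univ _, ?_⟩
    rw [hVdef]
    dsimp only
    exact Finset.mem_image.2 ⟨e.symm x, Finset.mem_filter.2 ⟨Finset.mem_univ _, h1, h2⟩,
      e.apply_symm_apply x⟩
  · -- sizes
    intro i
    have h1 := hVcard i
    have h2 := hstartdiff i.val
    omega
  · -- bad parts
    set Bad : Finset (Fin T) := Finset.univ.filter (fun i : Fin T =>
      ¬ (start (i.val+1) ≤ b1 ∨ (b1 ≤ start i.val ∧ start (i.val+1) ≤ b2))) with hBaddef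
    have hcard2 : Bad.card ≤ 2 := by
      have hsub : Bad ⊆
          (Finset.univ.filter (fun i : Fin T => start i.val < b1 ∧ b1 < start (i.val+1))) ∪
          (Finset.univ.filter (fun i : Fin T => start i.val < b2 ∧ b2 < start (i.val+1))) := by
        intro i hi
        rw [hBaddef] at hi
        have hi' := (Finset.mem_filter.1 hi).2
        push_neg at hi'
        obtain ⟨hA, hB⟩ := hi'
        rw [Finset.mem_union]
        by_cases hc : start i.val < b1
        · exact Or.inl (Finset.mem_filter.2 ⟨Finset.mem_univ _, hc, by omega⟩)
        · have hc' : b1 ≤ start i.val := by omega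
          have hBc := hB hc'
          have hdi := (hstartdiff i.val).1
          have hsn := hstartlen i
          refine Or.inr (Finset.mem_filter.2 ⟨Finset.mem_univ _, by omega, by omega⟩)
      have hone : ∀ b : ℕ,
          (Finset.univ.filter (fun i : Fin T => start i.val < b ∧ b < start (i.val+1))).card
            ≤ 1 := by
        intro b
        rw [Finset.card_le_one]
        intro i hi j hj
        simp only [Finset.mem_filter] at hi hj
        by_contra hne
        have hne' : i.val ≠ j.val := fun h => hne (Fin.ext h)
        rcases hne'.lt_or_gt with h | h
        · have := hstartmono _ _ (show i.val+1 ≤ j.val by omega)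
          omega
        · have := hstartmono _ _ (show j.val+1 ≤ i.val by omega)
          omega
      calc Bad.card ≤ _ := Finset.card_le_card hsub
        _ ≤ _ + _ := Finset.card_union_le _ _
        _ ≤ 2 := by
            have := hone b1
            have := hone b2
            omega
    refine ⟨Bad, ?_, ?_⟩
    · have hT2 : (2:ℝ) ≤ ε * T := by
        have hTc : (T:ℝ) = 2 * K := by rw [hTdef]; push_cast; ring
        rw [hTc]
        nlinarith [hKε]
      calc (Bad.card : ℝ) ≤ 2 := by exact_mod_cast hcard2
        _ ≤ ε * T := hT2
    · -- adequacy of good parts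
      intro i hi
      have hgood : start (i.val+1) ≤ b1 ∨ (b1 ≤ start i.val ∧ start (i.val+1) ≤ b2) := by
        by_contra hcon
        exact hi (by rw [hBaddef]; exact Finset.mem_filter.2 ⟨Finset.mem_univ _, hcon⟩)
      have hVcardge : n / T ≤ (V i).card := by
        have h1 := hVcard i
        have h2 := (hstartdiff i.val).1
        omega
      have hVstart : start i.val + (V i).card = start (i.val+1) := by
        have h1 := hVcard i
        have h2 := (hstartdiff i.val).1
        omega
      have hnum := hnumeric (V i).card hVcardge
      by_cases hred : start (i.val+1) ≤ b1
      · have hCi : C i = true := by rw [hCdef]; simp [hred]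
        rw [hCi]
        refine adequate_of_cliques hα (M := fun j => if j < p1 then M j else ∅)
          (κ := fun x => (e.symm x).val) (a := start i.val) ?hmono ?hklo ?hkhi ?hkM ?hnum
        case hklo =>
          intro x hx
          exact (hmemV i x hx).1
        case hkhi =>
          intro x hx
          rw [hVstart]
          exact (hmemV i x hx).2
        case hkM =>
          intro x hx
          obtain ⟨h1, h2⟩ := hmemV i x hx
          have hkb1 : (e.symm x).val < b1 := lt_of_lt_of_le h2 hred
          have hkb2 : (e.symm x).val < b2 := lt_of_lt_of_le hkb1 hb1b2
          have hjp1 : (e.symm x).val / α < p1 := by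
            rw [Nat.div_lt_iff_lt_mul hα]
            rw [hb1def] at hkb1
            exact hkb1
          have hmm := hMmem (e.symm x).val hkb2 (e.symm x).isLt
          have hex : e ⟨(e.symm x).val, (e.symm x).isLt⟩ = x := by
            rw [Fin.eta]
            exact e.apply_symm_apply x
          rw [hex] at hmm
          rw [if_pos hjp1]
          exact hmm
        case hnum => exact hnum
        case hmono =>
          intro j x hx y hy hxy
          by_cases hj : j < p1
          · rw [if_pos hj] at hx hy
            exact hMred j hj x hx y hy hxy
          · rw [if_neg hj] at hx
            exact absurd hx (Finset.notMem_empty x)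
      · have hgood2 : b1 ≤ start i.val ∧ start (i.val+1) ≤ b2 := hgood.resolve_left hred
        have hCi : C i = false := by rw [hCdef]; simp [hred]
        rw [hCi]
        refine adequate_of_cliques hα
          (M := fun j => if p1 ≤ j ∧ j < mainL.length then M j else ∅)
          (κ := fun x => (e.symm x).val) (a := start i.val) ?hmono ?hklo ?hkhi ?hkM ?hnum
        case hklo =>
          intro x hx
          exact (hmemV i x hx).1
        case hkhi =>
          intro x hx
          rw [hVstart]
          exact (hmemV i x hx).2
        case hkM =>
          intro x hx
          obtain ⟨h1, h2⟩ := hmemV i x hx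
          have hkb2 : (e.symm x).val < b2 := lt_of_lt_of_le h2 hgood2.2
          have hjlo : p1 ≤ (e.symm x).val / α := by
            rw [Nat.le_div_iff_mul_le hα]
            rw [hb1def] at hgood2
            omega
          have hjhi : (e.symm x).val / α < mainL.length := by
            rw [Nat.div_lt_iff_lt_mul hα]
            rw [hb2def] at hkb2
            exact hkb2
          have hmm := hMmem (e.symm x).val hkb2 (e.symm x).isLt
          have hex : e ⟨(e.symm x).val, (e.symm x).isLt⟩ = x := by
            rw [Fin.eta]
            exact e.apply_symm_apply x
          rw [hex] at hmm
          rw [if_pos ⟨hjlo, hjhi⟩]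
          exact hmm
        case hnum => exact hnum
        case hmono =>
          intro j x hx y hy hxy
          by_cases hj : p1 ≤ j ∧ j < mainL.length
          · rw [if_pos hj] at hx hy
            exact hMblue j hj.1 hj.2 x hx y hy hxy
          · rw [if_neg hj] at hx
            exact absurd hx (Finset.notMem_empty x)
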